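/- Every homeomorphism of the circle has zero topological entropy: if f is a homeomorphism of the circle ℝ/ℤ (equivalently, of the unit circle in ℂ), then the topological entropy of f (the cover entropy of f over the whole space) equals 0. -/

import Mathlib

/- Auxiliary development: every homeomorphism of the circle has zero cover entropy.
   Strategy: itineraries with respect to a partition of the circle into k arcs are
   constant on connected arcs avoiding the pulled-back boundary points, so the
   number of (n, 1/k)-Bowen balls needed to cover grows polynomially in n. -/
open AddCircle Set

noncomputable section
local instance : Fact ((0:ℝ) < 1) := ⟨one_pos⟩

abbrev X := AddCircle (1:ℝ)

noncomputable def bb (x : X) : ℝ := (equivIco 1 0 x : ℝ)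

lemma bb_mem (x : X) : bb x ∈ Ico (0:ℝ) 1 := by
  have := (equivIco (1:ℝ) 0 x).2
  simpa [bb] using this

lemma coe_bb (x : X) : ((bb x : ℝ) : X) = x := (equivIco (1:ℝ) 0).symm_apply_apply x

lemma bb_coe {t : ℝ} (ht : t ∈ Ico (0:ℝ) 1) : bb (t : X) = t := by
  have h : (equivIco (1:ℝ) 0) ((t:X)) = ⟨t, ⟨ht.1, by rw [zero_add]; exact ht.2⟩⟩ := by
    rw [Equiv.apply_eq_iff_eq_symm_apply]; rfl
  simp [bb, h]

lemma coe_inj {t s : ℝ} (ht : t ∈ Ico (0:ℝ) 1) (hs : s ∈ Ico (0:ℝ) 1) (h : (t:X) = s) : t = s := by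
  rw [coe_eq_coe_iff_of_mem_Ico (a := 0) (p := 1) (by simpa using ht) (by simpa using hs)] at h
  exact h

lemma dist_coe_le (a c : ℝ) : dist ((a:ℝ):X) ((c:ℝ):X) ≤ |a - c| := by
  rw [dist_eq_norm]
  have : ((a:ℝ):X) - ((c:ℝ):X) = ((a - c : ℝ) : X) := by rw [AddCircle.coe_sub]
  rw [this]
  exact (QuotientAddGroup.norm_mk_le_norm (m := a - c)).trans_eq (Real.norm_eq_abs _)

variable (k : ℕ)

/-- open arcs -/
def Arc (j : ℕ) : Set X := ((↑) : ℝ → X) '' Ioo ((j:ℝ)/k) ((j+1:ℝ)/k)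

/-- boundary points -/
def Dset : Set X := {x : X | ∃ j : ℕ, j < k ∧ x = (((j:ℝ)/k : ℝ) : X)}

lemma Ioo_subset_Ico {j : ℕ} (hj : j < k) : Ioo ((j:ℝ)/k) ((j+1:ℝ)/k) ⊆ Ico (0:ℝ) 1 := by
  have hk : (0:ℝ) < k := by exact_mod_cast Nat.pos_of_ne_zero (by omega)
  intro t ht
  constructor
  · exact le_trans (by positivity) ht.1.le
  · refine lt_of_lt_of_le ht.2 ?_
    rw [div_le_one hk]
    exact_mod_cast Nat.succ_le_of_lt hj

lemma arc_open (j : ℕ) : IsOpen (Arc k j) :=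
  QuotientAddGroup.isOpenMap_coe _ isOpen_Ioo

lemma idx_arc {j : ℕ} (hj : j < k) {x : X} (hx : x ∈ Arc k j) : ⌊(k:ℝ) * bb x⌋ = j := by
  obtain ⟨t, ht, rfl⟩ := hx
  have hk : (0:ℝ) < k := by exact_mod_cast Nat.pos_of_ne_zero (by omega)
  rw [bb_coe (Ioo_subset_Ico k hj ht)]
  have h1 : (j:ℝ) < t * k := (div_lt_iff₀ hk).1 ht.1
  have h2 : t * k < (j:ℝ) + 1 := (lt_div_iff₀ hk).1 ht.2
  rw [Int.floor_eq_iff]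
  constructor <;> push_cast <;> nlinarith

lemma mem_arc {x : X} (hk : 0 < k) (hx : x ∉ Dset k) :
    ∃ j : ℕ, j < k ∧ x ∈ Arc k j := by
  have hkR : (0:ℝ) < k := by exact_mod_cast hk
  set t := bb x with ht
  have htm := bb_mem x
  have h0 : (0:ℝ) ≤ (k:ℝ) * t := mul_nonneg (le_of_lt hkR) htm.1
  set j : ℕ := ⌊(k:ℝ) * t⌋.toNat with hjdef
  have hjc : (j:ℝ) = ⌊(k:ℝ) * t⌋ := by
    rw [hjdef]; exact_mod_cast Int.toNat_of_nonneg (Int.floor_nonneg.2 h0)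
  have hle : (j:ℝ) ≤ (k:ℝ) * t := hjc ▸ Int.floor_le _
  have hlt : (k:ℝ) * t < (j:ℝ) + 1 := by rw [hjc]; exact Int.lt_floor_add_one _
  have hjk : j < k := by
    have : (j:ℝ) < k := lt_of_le_of_lt hle (by nlinarith [htm.2])
    exact_mod_cast this
  refine ⟨j, hjk, ?_⟩
  have hne : t ≠ (j:ℝ)/k := by
    intro h
    exact hx ⟨j, hjk, by rw [← h, coe_bb]⟩
  refine ⟨t, ⟨?_, ?_⟩, coe_bb x⟩
  · rw [div_lt_iff₀ hkR]
    refine lt_of_le_of_ne (by nlinarith) (fun h ↦ hne ?_)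
    exact (eq_div_iff (ne_of_gt hkR)).2 h.symm
  · rw [lt_div_iff₀ hkR]
    nlinarith

lemma arc_disjoint {j j' : ℕ} (hj : j < k) (hj' : j' < k) (hne : j ≠ j') :
    Disjoint (Arc k j) (Arc k j') := by
  rw [Set.disjoint_left]
  rintro x ⟨t, ht, rfl⟩ hx'
  have h1 := idx_arc k hj ⟨t, ht, rfl⟩
  have h2 := idx_arc k hj' hx'
  rw [h1] at h2
  exact hne (by exact_mod_cast h2)

/-- floor index is constant on preconnected sets avoiding Dset -/
lemma idx_const_of_preconnected {F : Set X} (hk : 0 < k) (hF : IsPreconnected F)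
    (hD : ∀ x ∈ F, x ∉ Dset k) {x y : X} (hx : x ∈ F) (hy : y ∈ F) :
    ⌊(k:ℝ) * bb x⌋ = ⌊(k:ℝ) * bb y⌋ := by
  obtain ⟨j0, hj0, hxj⟩ := mem_arc k hk (hD x hx)
  have hsub : F ⊆ Arc k j0 := by
    apply hF.subset_left_of_subset_union (v := ⋃ j ∈ {j | j < k ∧ j ≠ j0}, Arc k j)
      (arc_open k j0) (isOpen_biUnion (fun j _ ↦ arc_open k j))
    · rw [Set.disjoint_right]
      intro z hz
      simp only [Set.mem_iUnion, Set.mem_setOf_eq] at hz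
      obtain ⟨j, ⟨hjk, hjne⟩, hzj⟩ := hz
      exact fun hz0 ↦ (Set.disjoint_left.1 (arc_disjoint k hj0 hjk (Ne.symm hjne))) hz0 hzj
    · intro z hz
      obtain ⟨j, hjk, hzj⟩ := mem_arc k hk (hD z hz)
      by_cases hje : j = j0
      · exact Or.inl (hje ▸ hzj)
      · refine Or.inr ?_
        simp only [Set.mem_iUnion]
        exact ⟨j, ⟨hjk, hje⟩, hzj⟩
    · exact ⟨x, hx, hxj⟩
  rw [idx_arc k hj0 (hsub hx), idx_arc k hj0 (hsub hy)]

/-- same floor index gives small distance -/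
lemma dist_le_of_idx_eq {x y : X} (hk : 0 < k)
    (h : ⌊(k:ℝ) * bb x⌋ = ⌊(k:ℝ) * bb y⌋) : dist x y ≤ 1 / k := by
  have hkR : (0:ℝ) < k := by exact_mod_cast hk
  have h1 := Int.sub_one_lt_floor ((k:ℝ) * bb x)
  have h2 := Int.floor_le ((k:ℝ) * bb x)
  have h3 := Int.sub_one_lt_floor ((k:ℝ) * bb y)
  have h4 := Int.floor_le ((k:ℝ) * bb y)
  have habs : |bb x - bb y| ≤ 1 / k := by
    rw [h] at h1 h2
    rw [le_div_iff₀ hkR, ← abs_of_pos hkR, ← abs_mul, abs_le]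
    constructor <;> nlinarith
  calc dist x y = dist ((bb x : ℝ) : X) ((bb y : ℝ) : X) := by rw [coe_bb, coe_bb]
  _ ≤ |bb x - bb y| := dist_coe_le _ _
  _ ≤ 1 / k := habs

open Dynamics Filter

section Dyn
variable (f : X ≃ₜ X) (k n : ℕ)

/-- all boundary points pulled back along the orbit -/
def DnF : Finset X :=
  (Finset.range n ×ˢ Finset.range k).image
    (fun p ↦ (⇑f.symm)^[p.1] ((((p.2 : ℝ))/(k:ℝ) : ℝ) : X))

lemma card_DnF : (DnF f k n).card ≤ n * k :=
  le_trans Finset.card_image_le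
    (by rw [Finset.card_product, Finset.card_range, Finset.card_range])

lemma not_mem_DnF {x : X} (hx : x ∉ DnF f k n) {i : ℕ} (hi : i < n) :
    (⇑f)^[i] x ∉ Dset k := by
  rintro ⟨j, hj, hfx⟩
  apply hx
  rw [DnF, Finset.mem_image]
  refine ⟨(i, j), Finset.mem_product.2 ⟨Finset.mem_range.2 hi, Finset.mem_range.2 hj⟩, ?_⟩
  show (⇑f.symm)^[i] ((((j : ℝ))/(k:ℝ) : ℝ) : X) = x
  rw [← hfx]
  exact Function.LeftInverse.iterate f.symm_apply_apply i x

lemma zero_mem_DnF (hk : 0 < k) (hn : 0 < n) : (((0:ℝ)):X) ∈ DnF f k n := by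
  rw [DnF, Finset.mem_image]
  refine ⟨(0, 0), Finset.mem_product.2 ⟨Finset.mem_range.2 hn, Finset.mem_range.2 hk⟩, ?_⟩
  show (⇑f.symm)^[0] ((((0:ℕ) : ℝ))/(k:ℝ) : ℝ) = (((0:ℝ)):X)
  norm_num

/-- representatives of boundary points -/
def sF : Finset ℝ := (DnF f k n).image bb

def s'F : Finset ℝ := insert (1:ℝ) (sF f k n)

noncomputable def aa (x : X) : ℝ := sSup ((sF f k n : Set ℝ) ∩ Iio (bb x))

noncomputable def cc (x : X) : ℝ := sInf ((s'F f k n : Set ℝ) ∩ Ioi (bb x))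

variable {f k n}

lemma bb_pos (hk : 0 < k) (hn : 0 < n) {x : X} (hx : x ∉ DnF f k n) : 0 < bb x := by
  rcases lt_or_eq_of_le (bb_mem x).1 with h | h
  · exact h
  · exfalso
    apply hx
    have : x = (((0:ℝ)):X) := by rw [← coe_bb x, ← h]
    rw [this]
    exact zero_mem_DnF f k n hk hn

lemma setA_props (hk : 0 < k) (hn : 0 < n) {x : X} (hx : x ∉ DnF f k n) :
    (aa f k n x ∈ (sF f k n : Set ℝ) ∩ Iio (bb x)) ∧
    ∀ t ∈ (sF f k n : Set ℝ) ∩ Iio (bb x), t ≤ aa f k n x := by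
  have hfin : ((sF f k n : Set ℝ) ∩ Iio (bb x)).Finite :=
    Set.Finite.inter_of_left (sF f k n).finite_toSet _
  have hne : ((sF f k n : Set ℝ) ∩ Iio (bb x)).Nonempty := by
    refine ⟨0, ?_, bb_pos hk hn hx⟩
    rw [Finset.mem_coe, sF, Finset.mem_image]
    exact ⟨(((0:ℝ)):X), zero_mem_DnF f k n hk hn, bb_coe ⟨le_refl 0, one_pos⟩⟩
  exact ⟨hne.csSup_mem hfin, fun t ht ↦ le_csSup hfin.bddAbove ht⟩

lemma setB_props (f : X ≃ₜ X) (k n : ℕ) {x : X} :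
    (cc f k n x ∈ (s'F f k n : Set ℝ) ∩ Ioi (bb x)) ∧
    ∀ t ∈ (s'F f k n : Set ℝ) ∩ Ioi (bb x), cc f k n x ≤ t := by
  have hfin : ((s'F f k n : Set ℝ) ∩ Ioi (bb x)).Finite :=
    Set.Finite.inter_of_left (s'F f k n).finite_toSet _
  have hne : ((s'F f k n : Set ℝ) ∩ Ioi (bb x)).Nonempty := by
    refine ⟨1, ?_, (bb_mem x).2⟩
    rw [Finset.mem_coe, s'F]
    exact Finset.mem_insert_self 1 _
  exact ⟨hne.csInf_mem hfin, fun t ht ↦ csInf_le hfin.bddBelow ht⟩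

lemma mem_sF_nonneg {t : ℝ} (ht : t ∈ sF f k n) : 0 ≤ t := by
  rw [sF, Finset.mem_image] at ht
  obtain ⟨z, _, rfl⟩ := ht
  exact (bb_mem z).1

lemma mem_s'F_le_one {t : ℝ} (ht : t ∈ s'F f k n) : t ≤ 1 := by
  rw [s'F, Finset.mem_insert] at ht
  rcases ht with rfl | ht
  · exact le_refl 1
  · rw [sF, Finset.mem_image] at ht
    obtain ⟨z, _, rfl⟩ := ht
    exact (bb_mem z).2.le

lemma bb_not_mem_sF {x : X} (hx : x ∉ DnF f k n) : bb x ∉ sF f k n := by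
  rw [sF, Finset.mem_image]
  rintro ⟨z, hz, hbz⟩
  have : z = x := by rw [← coe_bb z, ← coe_bb x, hbz]
  exact hx (this ▸ hz)

/-- points of the open arc between `aa x` and `cc x` avoid `DnF` -/
lemma arc_avoids (hk : 0 < k) (hn : 0 < n) {x : X} (hx : x ∉ DnF f k n)
    {t : ℝ} (ht : t ∈ Ioo (aa f k n x) (cc f k n x)) : (t : X) ∉ DnF f k n := by
  intro hmem
  have hA := setA_props hk hn hx
  have hB := setB_props f k n (x := x)
  have ht0 : 0 ≤ t := le_trans (mem_sF_nonneg hA.1.1) ht.1.le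
  have ht1 : t < 1 := lt_of_lt_of_le ht.2 (mem_s'F_le_one hB.1.1)
  have htF : t ∈ sF f k n := by
    rw [sF, Finset.mem_image]
    exact ⟨(t:X), hmem, bb_coe ⟨ht0, ht1⟩⟩
  have hne : t ≠ bb x := fun h ↦ bb_not_mem_sF hx (h ▸ htF)
  rcases lt_or_gt_of_ne hne with h | h
  · exact absurd (hA.2 t ⟨htF, h⟩) (not_le.2 ht.1)
  · have : t ∈ (s'F f k n : Set ℝ) ∩ Ioi (bb x) := ⟨by rw [s'F]; exact Finset.mem_insert_of_mem htF, h⟩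
    exact absurd (hB.2 t this) (not_le.2 ht.2)

/-- points with the same bracketing have the same itinerary -/
lemma itinerary_eq (hk : 0 < k) (hn : 0 < n) {x y : X}
    (hx : x ∉ DnF f k n) (hy : y ∉ DnF f k n)
    (ha : aa f k n x = aa f k n y) (hc : cc f k n x = cc f k n y)
    {i : ℕ} (hi : i < n) :
    ⌊(k:ℝ) * bb ((⇑f)^[i] x)⌋ = ⌊(k:ℝ) * bb ((⇑f)^[i] y)⌋ := by
  set C : Set X := ((↑) : ℝ → X) '' Ioo (aa f k n x) (cc f k n x) with hC
  have hxC : x ∈ C := ⟨bb x, ⟨(setA_props hk hn hx).1.2, (setB_props f k n (x := x)).1.2⟩, coe_bb x⟩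
  have hyC : y ∈ C := by
    rw [hC, ha, hc]
    exact ⟨bb y, ⟨(setA_props hk hn hy).1.2, (setB_props f k n (x := y)).1.2⟩, coe_bb y⟩
  have hpre : IsPreconnected ((⇑f)^[i] '' C) := by
    apply IsPreconnected.image _ _ ((f.continuous.iterate i).continuousOn)
    exact isPreconnected_Ioo.image _ (continuous_quotient_mk'.continuousOn)
  have havoid : ∀ z ∈ (⇑f)^[i] '' C, z ∉ Dset k := by
    rintro z ⟨c, ⟨t, ht, rfl⟩, rfl⟩
    exact not_mem_DnF f k n (arc_avoids hk hn hx ht) hi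
  exact idx_const_of_preconnected k hk hpre havoid
    (Set.mem_image_of_mem _ hxC) (Set.mem_image_of_mem _ hyC)

/-- main construction: a dynamical cover of polynomial size -/
lemma exists_dynCover (hk : 0 < k) (hn : 0 < n) {ε : ℝ} (hε : 1/(k:ℝ) < ε) :
    ∃ s : Finset X, IsDynCoverOf ⇑f Set.univ {p : X × X | dist p.1 p.2 < ε} n ↑s ∧
      s.card ≤ (n*k+2)^2 := by
  classical
  set g : ℝ × ℝ → X := fun p ↦
    if h : ∃ z : X, z ∉ DnF f k n ∧ aa f k n z = p.1 ∧ cc f k n z = p.2 then h.choose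
    else (((0:ℝ)):X) with hg
  refine ⟨DnF f k n ∪ (sF f k n ×ˢ s'F f k n).image g, ?_, ?_⟩
  · intro x _
    by_cases hx : x ∈ DnF f k n
    · refine ⟨x, Finset.mem_coe.2 (Finset.mem_union.2 (Or.inl hx)), ?_⟩
      rw [mem_dynEntourage]
      intro i _
      show dist ((⇑f)^[i] x) ((⇑f)^[i] x) < ε
      rw [dist_self]
      linarith [lt_of_le_of_lt (by positivity : (0:ℝ) ≤ 1/(k:ℝ)) hε]
    · have hex : ∃ z : X, z ∉ DnF f k n ∧ aa f k n z = aa f k n x ∧ cc f k n z = cc f k n x :=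
        ⟨x, hx, rfl, rfl⟩
      set y := g (aa f k n x, cc f k n x) with hy
      have hgy : y = hex.choose := by rw [hy, hg]; exact dif_pos hex
      obtain ⟨hyn, hya, hyc⟩ := hex.choose_spec
      refine ⟨y, ?_, ?_⟩
      · have : y ∈ (sF f k n ×ˢ s'F f k n).image g := by
          rw [Finset.mem_image]
          refine ⟨(aa f k n x, cc f k n x), Finset.mem_product.2 ⟨?_, ?_⟩, rfl⟩
          · exact (setA_props hk hn hx).1.1
          · exact (setB_props f k n (x := x)).1.1
        exact Finset.mem_coe.2 (Finset.mem_union.2 (Or.inr this))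
      · rw [mem_dynEntourage]
        intro i hi
        have hit : ⌊(k:ℝ) * bb ((⇑f)^[i] y)⌋ = ⌊(k:ℝ) * bb ((⇑f)^[i] x)⌋ := by
          rw [hgy]
          exact itinerary_eq hk hn hyn hx hya hyc hi
        have hd := dist_le_of_idx_eq k hk hit
        show dist ((⇑f)^[i] x) ((⇑f)^[i] y) < ε
        rw [dist_comm]
        exact lt_of_le_of_lt hd hε
  · apply le_trans (Finset.card_union_le _ _)
    have h1 : (DnF f k n).card ≤ n*k := card_DnF f k n
    have h2 : ((sF f k n ×ˢ s'F f k n).image g).card ≤ (n*k) * (n*k+1) := by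
      apply le_trans Finset.card_image_le
      rw [Finset.card_product]
      have hsF : (sF f k n).card ≤ n*k := le_trans Finset.card_image_le (card_DnF f k n)
      have hs'F : (s'F f k n).card ≤ n*k + 1 :=
        le_trans (Finset.card_insert_le _ _) (by omega)
      exact Nat.mul_le_mul hsF hs'F
    nlinarith

end Dyn


lemma littleO_aux {k : ℕ} (hk : 0 < k) :
    (fun n : ℕ ↦ Real.log ((((n*k+2)^2 : ℕ) : ℝ))) =o[atTop] (fun n : ℕ ↦ (n : ℝ)) := by
  have hlog : ∀ n : ℕ, Real.log ((((n*k+2)^2 : ℕ) : ℝ)) = 2 * Real.log ((n*k+2 : ℕ) : ℝ) := by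
    intro n
    push_cast
    rw [sq, Real.log_mul (by positivity) (by positivity)]
    ring
  simp only [hlog]
  apply Asymptotics.IsLittleO.const_mul_left
  have h1 : Tendsto (fun n : ℕ ↦ (((n*k+2 : ℕ)) : ℝ)) atTop atTop := by
    apply tendsto_natCast_atTop_atTop.comp
    apply tendsto_atTop_mono (fun n ↦ ?_) tendsto_id
    simp only [id_eq]
    have := Nat.le_mul_of_pos_right n hk
    omega
  have h2 := Real.isLittleO_log_id_atTop.comp_tendsto h1
  refine h2.trans_isBigO ?_
  rw [Asymptotics.isBigO_iff]
  refine ⟨(k:ℝ)+2, eventually_atTop.2 ⟨1, fun n hn ↦ ?_⟩⟩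
  simp only [Function.comp, id_eq, Real.norm_eq_abs]
  rw [abs_of_nonneg (by positivity), abs_of_nonneg (by positivity)]
  push_cast
  have : (1:ℝ) ≤ n := by exact_mod_cast hn
  nlinarith

lemma tendsto_aux {k : ℕ} (hk : 0 < k) :
    Tendsto (fun n : ℕ ↦ ENNReal.log ((((n*k+2)^2 : ℕ) : ℕ∞) : ENNReal) / (n : EReal))
      atTop (nhds 0) := by
  have hr : Tendsto (fun n : ℕ ↦ Real.log ((((n*k+2)^2 : ℕ) : ℝ)) / (n:ℝ)) atTop (nhds 0) :=
    (littleO_aux hk).tendsto_div_nhds_zero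
  have heq : ∀ n : ℕ, 1 ≤ n →
      ENNReal.log ((((n*k+2)^2 : ℕ) : ℕ∞) : ENNReal) / (n : EReal)
      = ((Real.log ((((n*k+2)^2 : ℕ) : ℝ)) / (n:ℝ) : ℝ) : EReal) := by
    intro n hn
    have hpos : (0:ℝ) < (((n*k+2)^2 : ℕ) : ℝ) := by positivity
    rw [ENat.toENNReal_coe]
    rw [ENNReal.log_pos_real' (by rwa [ENNReal.toReal_natCast _])]
    rw [ENNReal.toReal_natCast _, EReal.coe_div]
    norm_cast
  rw [show (0 : EReal) = ((0:ℝ) : EReal) by norm_num]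
  apply Tendsto.congr' (f₁ := fun n : ℕ ↦ ((Real.log ((((n*k+2)^2 : ℕ) : ℝ)) / (n:ℝ) : ℝ) : EReal))
  · filter_upwards [eventually_ge_atTop 1] with n hn
    exact (heq n hn).symm
  · exact EReal.tendsto_coe.2 hr

lemma entourage_entropy_le_zero {X : Type*} [UniformSpace X] (T : X → X) (F : Set X)
    (U : Set (X × X)) {k : ℕ} (hk : 0 < k)
    (h : ∀ n : ℕ, 1 ≤ n → coverMincard T F U n ≤ (((n*k+2)^2 : ℕ) : ℕ∞)) :
    coverEntropyEntourage T F U ≤ 0 := by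
  rw [coverEntropyEntourage]
  have key : (fun n : ℕ ↦ ENNReal.log (coverMincard T F U n) / (n : EReal))
      ≤ᶠ[atTop] (fun n : ℕ ↦ ENNReal.log ((((n*k+2)^2 : ℕ) : ℕ∞) : ENNReal) / (n : EReal)) := by
    filter_upwards [eventually_ge_atTop 1] with n hn
    apply EReal.monotone_div_right_of_nonneg (by exact_mod_cast Nat.cast_nonneg' n)
    exact ENNReal.log_monotone (ENat.toENNReal_le.2 (h n hn))
  exact le_of_le_of_eq (limsup_le_limsup key) ((tendsto_aux hk).limsup_eq)

end

/-- Every homeomorphism of the circle `ℝ/ℤ` has zero topological entropy (cover entropy over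
the whole space). -/
theorem stmt10 (f : AddCircle (1 : ℝ) ≃ₜ AddCircle (1 : ℝ)) :
    Dynamics.coverEntropy (f : AddCircle (1 : ℝ) → AddCircle (1 : ℝ)) Set.univ = 0 := by
  haveI : Fact ((0:ℝ) < 1) := ⟨one_pos⟩
  refine le_antisymm ?_ (Dynamics.coverEntropy_nonneg ⇑f Set.univ_nonempty)
  rw [Dynamics.coverEntropy_eq_iSup_basis Metric.uniformity_basis_dist ⇑f Set.univ]
  refine iSup₂_le fun ε hε ↦ ?_
  set k : ℕ := ⌈1/ε⌉₊ + 1 with hkdef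
  have hk : 0 < k := Nat.succ_pos _
  have h2 : 1/ε < (k:ℝ) := by
    rw [hkdef]
    push_cast
    linarith [Nat.le_ceil (1/ε)]
  have hεk : 1/(k:ℝ) < ε := by
    rw [div_lt_iff₀ (by exact_mod_cast hk)]
    have h3 : (1/ε) * ε = 1 := one_div_mul_cancel (ne_of_gt hε)
    nlinarith
  apply entourage_entropy_le_zero ⇑f Set.univ _ hk
  intro n hn
  obtain ⟨s, hs, hcard⟩ := exists_dynCover (f := f) hk hn hεk
  exact le_trans hs.coverMincard_le_card (by exact_mod_cast hcard)
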